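/- Let n ≥ 1, s ≥ 2, let X_S ∈ ℝ^{n×s}, and let D denote the s×(s−1) matrix (I_{s−1}, −1_{s−1})ᵀ. Set Σ_SS = (1/n) X_Sᵀ X_S ∈ ℝ^{s×s} and Σ^p_SS = (1/n)(X_S D)ᵀ(X_S D) ∈ ℝ^{(s−1)×(s−1)}. Then the smallest eigenvalue of Σ_SS is less than or equal to the smallest eigenvalue of Σ^p_SS, i.e., Λ_min(Σ_SS) ≤ Λ_min(Σ^p_SS). -/
import Mathlib

open Matrix
open scoped BigOperators

/-- The `s × (s−1)` matrix `D = (I_{s−1}, −1_{s−1})ᵀ`. -/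
def Dmat (s : ℕ) : Matrix (Fin s) (Fin (s - 1)) ℝ := fun i j =>
  if (i : ℕ) = (j : ℕ) then 1 else if (i : ℕ) = s - 1 then -1 else 0

/-- The smallest eigenvalue of a real symmetric matrix, expressed as the infimum of the
Rayleigh quotient `vᵀ M v / ‖v‖₂²` over nonzero vectors `v`. -/
noncomputable def lamMin {m : Type*} [Fintype m] (M : Matrix m m ℝ) : ℝ :=
  ⨅ v : {v : m → ℝ // v ≠ 0}, (v.1 ⬝ᵥ M.mulVec v.1) / ∑ i, (v.1 i) ^ 2

lemma Dmat_mulVec_castSucc (t : ℕ) (v : Fin t → ℝ) (i : Fin t) :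
    (Dmat (t + 1)).mulVec v i.castSucc = v i := by
  have key : ∀ j : Fin t, Dmat (t+1) i.castSucc j * v j = if j = i then v i else 0 := by
    intro j
    simp only [Dmat, Fin.coe_castSucc]
    rcases eq_or_ne j i with rfl | hj
    · simp
    · have h1 : (i : ℕ) ≠ (j : ℕ) := fun h => hj (Fin.ext h.symm)
      have h2 : (i : ℕ) ≠ t := Nat.ne_of_lt i.isLt
      simp [h1, h2, hj]
  show (∑ j : Fin t, Dmat (t+1) i.castSucc j * v j) = v i
  rw [Finset.sum_congr rfl (fun j _ => key j)]
  simp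

lemma Dmat_mulVec_last (t : ℕ) (v : Fin t → ℝ) :
    (Dmat (t + 1)).mulVec v (Fin.last t) = -∑ j, v j := by
  have key : ∀ j : Fin t, Dmat (t+1) (Fin.last t) j * v j = -v j := by
    intro j
    have h : (t : ℕ) ≠ (j : ℕ) := (Nat.ne_of_lt j.isLt).symm
    simp [Dmat, Fin.val_last, h]
  show (∑ j : Fin t, Dmat (t+1) (Fin.last t) j * v j) = -∑ j, v j
  rw [Finset.sum_congr rfl (fun j _ => key j)]
  simp

/-- With `Σ_SS = (1/n) X_Sᵀ X_S` and `Σ^p_SS = (1/n)(X_S D)ᵀ(X_S D)`, the smallest eigenvalue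
of `Σ_SS` is at most the smallest eigenvalue of `Σ^p_SS`. -/
theorem lamMin_gram_le_lamMin_logratio_gram
    (n s : ℕ) (hn : 1 ≤ n) (hs : 2 ≤ s) (XS : Matrix (Fin n) (Fin s) ℝ) :
    lamMin ((1 / (n : ℝ)) • (XSᵀ * XS))
      ≤ lamMin ((1 / (n : ℝ)) • ((XS * Dmat s)ᵀ * (XS * Dmat s))) := by
  obtain ⟨t, rfl⟩ : ∃ t, s = t + 1 := ⟨s - 1, (Nat.succ_pred_eq_of_pos (by omega)).symm⟩
  set c : ℝ := 1 / (n : ℝ) with hc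
  have hcnn : 0 ≤ c := by positivity
  set S : Matrix (Fin (t+1)) (Fin (t+1)) ℝ := c • (XSᵀ * XS) with hS
  have quad_nonneg : ∀ u : Fin (t+1) → ℝ, 0 ≤ u ⬝ᵥ S.mulVec u := by
    intro u
    have : u ⬝ᵥ S.mulVec u = c * ((XS.mulVec u) ⬝ᵥ (XS.mulVec u)) := by
      rw [hS, Matrix.smul_mulVec, dotProduct_smul, smul_eq_mul]
      congr 1
      rw [← Matrix.mulVec_mulVec, Matrix.dotProduct_mulVec, Matrix.vecMul_transpose]
    rw [this]
    have h0 : 0 ≤ (XS.mulVec u) ⬝ᵥ (XS.mulVec u) := by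
      simp only [dotProduct]
      exact Finset.sum_nonneg fun i _ => mul_self_nonneg _
    exact mul_nonneg hcnn h0
  have hbdd : BddBelow (Set.range fun v : {v : Fin (t+1) → ℝ // v ≠ 0} =>
      (v.1 ⬝ᵥ S.mulVec v.1) / ∑ i, (v.1 i) ^ 2) := by
    refine ⟨0, ?_⟩
    rintro x ⟨v, rfl⟩
    exact div_nonneg (quad_nonneg v.1) (Finset.sum_nonneg fun i _ => sq_nonneg _)
  have ht : 1 ≤ t := by omega
  have hne : Nonempty {v : Fin (t + 1 - 1) → ℝ // v ≠ 0} := by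
    refine ⟨⟨fun _ => 1, ?_⟩⟩
    intro h
    have := congrFun h ⟨0, by omega⟩
    simp at this
  rw [lamMin, lamMin]
  apply le_ciInf
  rintro ⟨v, hv⟩
  set w : Fin (t+1) → ℝ := (Dmat (t+1)).mulVec v with hw
  have hwcs : ∀ i : Fin t, w i.castSucc = v i := fun i => Dmat_mulVec_castSucc t v i
  have hwne : w ≠ 0 := by
    obtain ⟨i, hi⟩ := Function.ne_iff.mp hv
    intro h
    exact hi (by rw [← hwcs i, h]; rfl)
  have hnum : v ⬝ᵥ ((c • ((XS * Dmat (t+1))ᵀ * (XS * Dmat (t+1)))).mulVec v)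
      = w ⬝ᵥ S.mulVec w := by
    rw [Matrix.smul_mulVec, dotProduct_smul, hS, Matrix.smul_mulVec,
      dotProduct_smul]
    congr 1
    rw [Matrix.transpose_mul, Matrix.mul_assoc, ← Matrix.mul_assoc (XSᵀ)]
    rw [← Matrix.mulVec_mulVec, Matrix.dotProduct_mulVec, Matrix.vecMul_transpose,
      ← Matrix.mulVec_mulVec]
  have hden_pos : 0 < ∑ i, (v i) ^ 2 := by
    obtain ⟨i, hi⟩ := Function.ne_iff.mp hv
    exact Finset.sum_pos' (fun i _ => sq_nonneg _) ⟨i, Finset.mem_univ i, lt_of_le_of_ne (sq_nonneg _) (Ne.symm (pow_ne_zero 2 hi))⟩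
  have hden_le : ∑ i, (v i) ^ 2 ≤ ∑ i, (w i) ^ 2 := by
    rw [Fin.sum_univ_castSucc]
    have h2 : ∑ i : Fin t, (w i.castSucc) ^ 2 = ∑ i, (v i) ^ 2 :=
      Finset.sum_congr rfl fun i _ => by rw [hwcs i]
    rw [h2]
    nlinarith [sq_nonneg (w (Fin.last t))]
  have step1 : (⨅ u : {u : Fin (t+1) → ℝ // u ≠ 0},
      (u.1 ⬝ᵥ S.mulVec u.1) / ∑ i, (u.1 i) ^ 2)
      ≤ (w ⬝ᵥ S.mulVec w) / ∑ i, (w i) ^ 2 := ciInf_le hbdd ⟨w, hwne⟩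
  refine step1.trans ?_
  rw [hnum]
  exact div_le_div_of_nonneg_left (quad_nonneg w) hden_pos hden_le
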